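/- Every law-invariant monetary risk measure ρ on L^∞(P) over a nonatomic probability space admits the representation ρ(X) = min over Z ∈ 𝒜_ρ of sup over t ∈ (0,1) of (VaR_t(X) − VaR_t(Z)), with the minimum attained at Z = X + ρ(X). -/

import Mathlib

open MeasureTheory ProbabilityTheory Filter Set
open scoped ENNReal

/-- `X` belongs to `L^∞(P)`: measurable and essentially bounded. -/
def MemLinf {Ω : Type*} [MeasurableSpace Ω] (P : Measure Ω) (X : Ω → ℝ) : Prop :=
  Measurable X ∧ ∃ C : ℝ, ∀ᵐ ω ∂P, |X ω| ≤ C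

/-- The upper quantile function `q_X(t) = inf {x : F_X(x) > t}` of `X` under `P`. -/
noncomputable def uq {Ω : Type*} [MeasurableSpace Ω] (P : Measure Ω)
    (X : Ω → ℝ) (t : ℝ) : ℝ :=
  sInf {x : ℝ | t < cdf (P.map X) x}

/-- `VaR_t(X) = −q_X(t)`. -/
noncomputable def VaR {Ω : Type*} [MeasurableSpace Ω] (P : Measure Ω)
    (X : Ω → ℝ) (t : ℝ) : ℝ :=
  - uq P X t

section Aux

variable {Ω : Type*} [MeasurableSpace Ω] {P : Measure Ω} [IsProbabilityMeasure P]
  {X : Ω → ℝ} {C : ℝ}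

lemma sInf_shift (S : Set ℝ) (m : ℝ) (hne : S.Nonempty) (hbd : BddBelow S) :
    sInf {x : ℝ | x - m ∈ S} = sInf S + m := by
  obtain ⟨y0, hy0⟩ := hne
  obtain ⟨b, hb⟩ := hbd
  have hne' : {x : ℝ | x - m ∈ S}.Nonempty := ⟨y0 + m, by simpa using hy0⟩
  have hbd' : BddBelow {x : ℝ | x - m ∈ S} := ⟨b + m, fun x hx => by
    have := hb hx; simp only [mem_setOf_eq] at hx ⊢; linarith⟩
  apply le_antisymm
  · have h1 : sInf {x : ℝ | x - m ∈ S} - m ≤ sInf S := by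
      apply le_csInf ⟨y0, hy0⟩
      intro y hy
      have : sInf {x : ℝ | x - m ∈ S} ≤ y + m := csInf_le hbd' (by simpa using hy)
      linarith
    linarith
  · apply le_csInf hne'
    intro x hx
    have : sInf S ≤ x - m := csInf_le ⟨b, hb⟩ hx
    linarith

lemma map_prob (hXm : Measurable X) : IsProbabilityMeasure (P.map X) :=
  Measure.isProbabilityMeasure_map hXm.aemeasurable

lemma cdf_hi (hXm : Measurable X) (hC : ∀ᵐ ω ∂P, |X ω| ≤ C) : cdf (P.map X) C = 1 := by
  haveI : IsProbabilityMeasure (P.map X) := map_prob hXm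
  rw [cdf_eq_real (P.map X), measureReal_def]
  have h1 : P.map X (Iic C) = 1 := by
    rw [Measure.map_apply hXm measurableSet_Iic]
    rw [← prob_compl_eq_zero_iff (measurableSet_Iic.preimage hXm)]
    have h0 : P {ω | ¬ X ω ≤ C} = 0 := ae_iff.mp (hC.mono fun ω hω => le_of_abs_le hω)
    rw [← nonpos_iff_eq_zero, ← h0]
    apply measure_mono
    intro ω hω
    simpa using hω
  rw [h1]; simp

lemma cdf_lo (hXm : Measurable X) (hC : ∀ᵐ ω ∂P, |X ω| ≤ C) {x : ℝ} (hx : x < -C) :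
    cdf (P.map X) x = 0 := by
  haveI : IsProbabilityMeasure (P.map X) := map_prob hXm
  rw [cdf_eq_real (P.map X), measureReal_def]
  have h1 : P.map X (Iic x) = 0 := by
    rw [Measure.map_apply hXm measurableSet_Iic]
    rw [← nonpos_iff_eq_zero]
    rw [show (0 : ℝ≥0∞) = P {ω | ¬ |X ω| ≤ C} from (ae_iff.mp hC).symm]
    apply measure_mono
    intro ω hω
    simp only [mem_preimage, mem_Iic] at hω
    simp only [mem_setOf_eq, not_le]
    have := neg_le_abs (X ω)
    linarith
  rw [h1]; simp

lemma S_lb (hXm : Measurable X) (hC : ∀ᵐ ω ∂P, |X ω| ≤ C) {t : ℝ} (ht : 0 ≤ t) :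
    ∀ x ∈ {x : ℝ | t < cdf (P.map X) x}, -C ≤ x := by
  intro x hx
  by_contra hxc
  push_neg at hxc
  rw [mem_setOf_eq, cdf_lo hXm hC hxc] at hx
  have := cdf_nonneg (P.map X) x
  linarith

lemma S_bddBelow (hXm : Measurable X) (hC : ∀ᵐ ω ∂P, |X ω| ≤ C) {t : ℝ} (ht : 0 ≤ t) :
    BddBelow {x : ℝ | t < cdf (P.map X) x} :=
  ⟨-C, fun x hx => S_lb hXm hC ht x hx⟩

lemma S_mem_C (hXm : Measurable X) (hC : ∀ᵐ ω ∂P, |X ω| ≤ C) {t : ℝ} (ht : t < 1) :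
    C ∈ {x : ℝ | t < cdf (P.map X) x} := by
  rw [mem_setOf_eq, cdf_hi hXm hC]; exact ht

lemma uq_le_C (hXm : Measurable X) (hC : ∀ᵐ ω ∂P, |X ω| ≤ C) {t : ℝ}
    (ht0 : 0 ≤ t) (ht1 : t < 1) : uq P X t ≤ C :=
  csInf_le (S_bddBelow hXm hC ht0) (S_mem_C hXm hC ht1)

lemma neg_C_le_uq (hXm : Measurable X) (hC : ∀ᵐ ω ∂P, |X ω| ≤ C) {t : ℝ}
    (ht0 : 0 ≤ t) (ht1 : t < 1) : -C ≤ uq P X t :=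
  le_csInf ⟨C, S_mem_C hXm hC ht1⟩ fun x hx => S_lb hXm hC ht0 x hx

lemma uq_le_of_lt_cdf (hXm : Measurable X) (hC : ∀ᵐ ω ∂P, |X ω| ≤ C) {t x : ℝ}
    (ht0 : 0 ≤ t) (htx : t < cdf (P.map X) x) : uq P X t ≤ x :=
  csInf_le (S_bddBelow hXm hC ht0) htx

lemma le_cdf_of_uq_le (hXm : Measurable X) (hC : ∀ᵐ ω ∂P, |X ω| ≤ C) {t x : ℝ}
    (ht1 : t < 1) (hux : uq P X t ≤ x) : t ≤ cdf (P.map X) x := by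
  by_contra hcon
  push_neg at hcon
  have hrc := (cdf (P.map X)).right_continuous x
  have hev : ∀ᶠ y in nhdsWithin x (Ici x), cdf (P.map X) y < t :=
    hrc.eventually_lt_const hcon
  have hev' : ∀ᶠ y in nhdsWithin x (Ioi x), cdf (P.map X) y < t :=
    hev.filter_mono (nhdsWithin_mono x Ioi_subset_Ici_self)
  obtain ⟨y, hyc, hyx⟩ := (hev'.and eventually_mem_nhdsWithin).exists
  have hyb : y ≤ uq P X t := by
    apply le_csInf ⟨C, S_mem_C hXm hC ht1⟩
    intro z hz
    by_contra hzy
    push_neg at hzy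
    have : cdf (P.map X) z ≤ cdf (P.map X) y := (cdf (P.map X)).mono hzy.le
    rw [mem_setOf_eq] at hz
    linarith
  exact absurd (hyb.trans hux) (not_le.mpr hyx)

/-- A monotone extension of the upper quantile function to all of `ℝ`. -/
noncomputable def qext {Ω : Type*} [MeasurableSpace Ω] (P : Measure Ω)
    (X : Ω → ℝ) (C : ℝ) : ℝ → ℝ :=
  fun t => if t < 1 then uq P X (max t 0) else C + 1

lemma qext_eq (t : ℝ) (ht : t ∈ Ioo (0:ℝ) 1) : qext P X C t = uq P X t := by
  rw [qext, if_pos ht.2, max_eq_left ht.1.le]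

lemma qext_mono (hXm : Measurable X) (hC : ∀ᵐ ω ∂P, |X ω| ≤ C) :
    Monotone (qext P X C) := by
  intro a b hab
  unfold qext
  by_cases hb : b < 1
  · rw [if_pos (lt_of_le_of_lt hab hb), if_pos hb]
    apply csInf_le_csInf (S_bddBelow hXm hC (le_max_right a 0))
      ⟨C, S_mem_C hXm hC (by simp [hb, lt_of_le_of_lt hab hb])⟩
    intro x hx
    exact lt_of_le_of_lt (max_le_max hab le_rfl) hx
  · rw [if_neg hb]
    by_cases ha : a < 1
    · rw [if_pos ha]
      have := uq_le_C hXm hC (le_max_right a 0) (max_lt ha one_pos)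
      linarith
    · rw [if_neg ha]

lemma qext_bound (hXm : Measurable X) (hC : ∀ᵐ ω ∂P, |X ω| ≤ C) {t : ℝ}
    (ht : t ∈ Ioo (0:ℝ) 1) : |qext P X C t| ≤ |C| := by
  rw [qext_eq t ht, abs_le]
  constructor
  · have := neg_C_le_uq hXm hC ht.1.le ht.2
    have : -|C| ≤ -C := neg_le_neg (le_abs_self C)
    linarith [neg_C_le_uq hXm hC ht.1.le ht.2]
  · exact (uq_le_C hXm hC ht.1.le ht.2).trans (le_abs_self C)


lemma MemLinf.add_const (h : MemLinf P X) (c : ℝ) : MemLinf P (fun ω => X ω + c) := by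
  obtain ⟨hm, C, hC⟩ := h
  exact ⟨hm.add_const c, C + |c|, hC.mono fun ω hω => by
    calc |X ω + c| ≤ |X ω| + |c| := abs_add_le _ _
      _ ≤ C + |c| := by linarith⟩

lemma uq_shift (hXm : Measurable X) (hC : ∀ᵐ ω ∂P, |X ω| ≤ C) (m : ℝ) {t : ℝ}
    (ht : t ∈ Ioo (0:ℝ) 1) : uq P (fun ω => X ω + m) t = uq P X t + m := by
  haveI : IsProbabilityMeasure (P.map X) := map_prob hXm
  haveI : IsProbabilityMeasure (P.map (fun ω => X ω + m)) := map_prob (hXm.add_const m)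
  have hmap : P.map (fun ω => X ω + m) = (P.map X).map (fun y => y + m) := by
    rw [Measure.map_map (measurable_add_const m) hXm]; rfl
  have hcdf : ∀ x : ℝ, cdf (P.map (fun ω => X ω + m)) x = cdf (P.map X) (x - m) := by
    intro x
    rw [cdf_eq_real (P.map (fun ω => X ω + m)) x, cdf_eq_real (P.map X) (x - m), measureReal_def, measureReal_def, hmap,
      Measure.map_apply (measurable_add_const m) measurableSet_Iic]
    congr 2
    ext y
    simp only [mem_preimage, mem_Iic, id_eq]
    constructor <;> intro <;> linarith
  have hset : {x : ℝ | t < cdf (P.map (fun ω => X ω + m)) x}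
      = {x : ℝ | x - m ∈ {x : ℝ | t < cdf (P.map X) x}} := by
    ext x; simp only [mem_setOf_eq, hcdf]
  rw [uq, hset, sInf_shift _ m ⟨C, S_mem_C hXm hC ht.2⟩ (S_bddBelow hXm hC ht.1.le)]
  rfl

lemma map_qext (hXm : Measurable X) (hC : ∀ᵐ ω ∂P, |X ω| ≤ C)
    {U : Ω → ℝ} (hU : Measurable U) (hUd : P.map U = volume.restrict (Ioo (0 : ℝ) 1)) :
    P.map (fun ω => qext P X C (U ω)) = P.map X := by
  have hqm : Measurable (qext P X C) := (qext_mono hXm hC).measurable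
  haveI : IsProbabilityMeasure (P.map X) := map_prob hXm
  haveI : IsProbabilityMeasure (P.map (fun ω => qext P X C (U ω))) := map_prob (show Measurable fun ω => qext P X C (U ω) from hqm.comp hU)
  apply Measure.ext_of_Iic
  intro x
  set F := cdf (P.map X) x with hF
  have hF1 : F ≤ 1 := cdf_le_one _ x
  have hmap : P.map (fun ω => qext P X C (U ω)) (Iic x)
      = volume ((qext P X C) ⁻¹' (Iic x) ∩ Ioo 0 1) := by
    rw [Measure.map_apply (show Measurable fun ω => qext P X C (U ω) from hqm.comp hU) measurableSet_Iic,
      show (fun ω => qext P X C (U ω)) ⁻¹' (Iic x) = U ⁻¹' ((qext P X C) ⁻¹' (Iic x)) from rfl,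
      ← Measure.map_apply hU (hqm measurableSet_Iic), hUd,
      Measure.restrict_apply (hqm measurableSet_Iic)]
  have hsub1 : Ioo (0:ℝ) F ⊆ (qext P X C) ⁻¹' (Iic x) ∩ Ioo 0 1 := by
    intro t ht
    have ht1 : t ∈ Ioo (0:ℝ) 1 := ⟨ht.1, lt_of_lt_of_le ht.2 hF1⟩
    refine ⟨?_, ht1⟩
    rw [mem_preimage, mem_Iic, qext_eq t ht1]
    exact uq_le_of_lt_cdf hXm hC ht1.1.le ht.2
  have hsub2 : (qext P X C) ⁻¹' (Iic x) ∩ Ioo 0 1 ⊆ Ioc 0 F := by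
    rintro t ⟨h1, h2⟩
    rw [mem_preimage, mem_Iic, qext_eq t h2] at h1
    exact ⟨h2.1, le_cdf_of_uq_le hXm hC h2.2 h1⟩
  have hvol : volume ((qext P X C) ⁻¹' (Iic x) ∩ Ioo 0 1) = ENNReal.ofReal F := by
    apply le_antisymm
    · calc volume ((qext P X C) ⁻¹' (Iic x) ∩ Ioo 0 1) ≤ volume (Ioc 0 F) := measure_mono hsub2
        _ = ENNReal.ofReal F := by rw [Real.volume_Ioc, sub_zero]
    · calc ENNReal.ofReal F = volume (Ioo (0:ℝ) F) := by rw [Real.volume_Ioo, sub_zero]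
        _ ≤ _ := measure_mono hsub1
  rw [hmap, hvol, hF, ofReal_cdf]

end Aux

/-- Every law-invariant monetary risk measure `ρ` on a nonatomic space admits the
representation `ρ(X) = min_{Z ∈ 𝒜_ρ} sup_{t ∈ (0,1)} (VaR_t(X) − VaR_t(Z))`, with the
minimum attained at `Z = X + ρ(X)`. -/
theorem stmt14 {Ω : Type*} [MeasurableSpace Ω] (P : Measure Ω) [IsProbabilityMeasure P]
    (U : Ω → ℝ) (hU : Measurable U)
    (hUd : P.map U = volume.restrict (Ioo (0 : ℝ) 1))
    (ρ : (Ω → ℝ) → ℝ)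
    (hmono : ∀ X Y : Ω → ℝ, MemLinf P X → MemLinf P Y →
      (∀ᵐ ω ∂P, X ω ≤ Y ω) → ρ Y ≤ ρ X)
    (hTI : ∀ X : Ω → ℝ, MemLinf P X → ∀ m : ℝ, ρ (fun ω => X ω + m) = ρ X - m)
    (hLI : ∀ X Y : Ω → ℝ, MemLinf P X → MemLinf P Y → P.map X = P.map Y → ρ X = ρ Y)
    (X : Ω → ℝ) (hX : MemLinf P X) :
    IsLeast {r : ℝ | ∃ Z : Ω → ℝ, MemLinf P Z ∧ ρ Z ≤ 0 ∧
        r = sSup {s : ℝ | ∃ t ∈ Ioo (0 : ℝ) 1, s = VaR P X t - VaR P Z t}} (ρ X)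
    ∧ ρ (fun ω => X ω + ρ X) ≤ 0
    ∧ ρ X = sSup {s : ℝ | ∃ t ∈ Ioo (0 : ℝ) 1,
        s = VaR P X t - VaR P (fun ω => X ω + ρ X) t} := by
  obtain ⟨hXm, C, hC⟩ := hX
  have hXL : MemLinf P X := ⟨hXm, C, hC⟩
  have hhalf : (1/2 : ℝ) ∈ Ioo (0:ℝ) 1 := by norm_num
  have hshift : ∀ c : ℝ, ∀ t ∈ Ioo (0:ℝ) 1, VaR P X t - VaR P (fun ω => X ω + c) t = c := by
    intro c t ht
    rw [VaR, VaR, uq_shift hXm hC c ht]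
    ring
  have hsetc : ∀ c : ℝ, {s : ℝ | ∃ t ∈ Ioo (0 : ℝ) 1,
      s = VaR P X t - VaR P (fun ω => X ω + c) t} = {c} := by
    intro c
    ext s
    simp only [mem_setOf_eq, mem_singleton_iff]
    constructor
    · rintro ⟨t, ht, rfl⟩; exact hshift c t ht
    · rintro rfl; exact ⟨1/2, hhalf, (hshift _ _ hhalf).symm⟩
  have hmem2 : ρ (fun ω => X ω + ρ X) ≤ 0 := by rw [hTI X hXL (ρ X)]; simp
  have hpart3 : ρ X = sSup {s : ℝ | ∃ t ∈ Ioo (0 : ℝ) 1,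
      s = VaR P X t - VaR P (fun ω => X ω + ρ X) t} := by
    rw [hsetc (ρ X), csSup_singleton]
  have hUm : ∀ᵐ ω ∂P, U ω ∈ Ioo (0:ℝ) 1 := by
    rw [ae_iff]
    have hpre : {ω | ¬ U ω ∈ Ioo (0:ℝ) 1} = U ⁻¹' (Ioo (0:ℝ) 1)ᶜ := rfl
    rw [hpre, ← Measure.map_apply hU measurableSet_Ioo.compl, hUd,
      Measure.restrict_apply measurableSet_Ioo.compl]
    simp
  refine ⟨⟨⟨fun ω => X ω + ρ X, hXL.add_const (ρ X), hmem2, hpart3⟩, ?_⟩, hmem2, hpart3⟩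
  rintro r ⟨Z, ⟨hZm, D, hD⟩, hρZ, rfl⟩
  set E := {s : ℝ | ∃ t ∈ Ioo (0 : ℝ) 1, s = VaR P X t - VaR P Z t} with hE
  have hEbd : BddAbove E := by
    refine ⟨D + C, ?_⟩
    rintro s ⟨t, ht, rfl⟩
    rw [VaR, VaR]
    have h1 := uq_le_C hZm hD ht.1.le ht.2
    have h2 := neg_C_le_uq hXm hC ht.1.le ht.2
    linarith
  set r := sSup E with hr
  have hkey : ∀ t ∈ Ioo (0:ℝ) 1, uq P Z t ≤ uq P X t + r := by
    intro t ht
    have h := le_csSup hEbd (⟨t, ht, rfl⟩ : VaR P X t - VaR P Z t ∈ E)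
    rw [VaR, VaR] at h
    linarith
  set X' := fun ω => qext P X C (U ω) with hX'def
  set Z' := fun ω => qext P Z D (U ω) with hZ'def
  have hX' : MemLinf P X' :=
    ⟨(qext_mono hXm hC).measurable.comp hU, |C|, hUm.mono fun ω hω => qext_bound hXm hC hω⟩
  have hZ' : MemLinf P Z' :=
    ⟨(qext_mono hZm hD).measurable.comp hU, |D|, hUm.mono fun ω hω => qext_bound hZm hD hω⟩
  have hZX' : ∀ᵐ ω ∂P, Z' ω ≤ X' ω + r := by
    filter_upwards [hUm] with ω hω
    rw [hX'def, hZ'def]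
    simp only
    rw [qext_eq _ hω, qext_eq _ hω]
    exact hkey _ hω
  have h1 : ρ (fun ω => X' ω + r) ≤ ρ Z' :=
    hmono Z' (fun ω => X' ω + r) hZ' (hX'.add_const r) hZX'
  have h2 : ρ (fun ω => X' ω + r) = ρ X' - r := hTI X' hX' r
  have h3 : ρ X' = ρ X := hLI X' X hX' hXL (map_qext hXm hC hU hUd)
  have h4 : ρ Z' = ρ Z := hLI Z' Z hZ' ⟨hZm, D, hD⟩ (map_qext hZm hD hU hUd)
  linarith
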